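/- Let r, m be positive integers. Then the m-fold convolution g_r^{*m} of g_r with itself satisfies g_r^{*m}(x) = ((r!)^m/(mr−1)!) · (m−x)^{mr−1} for all x ∈ [m−1, m]. -/

import Mathlib

/-- density of the Beta(1,r) distribution: `r (1-x)^(r-1)` on `[0,1]`, `0` elsewhere. -/
noncomputable def gdens (r : ℕ) : ℝ → ℝ :=
  fun x => if x ∈ Set.Icc (0 : ℝ) 1 then (r : ℝ) * (1 - x) ^ (r - 1) else 0

open MeasureTheory in
/-- `iterConv f m` is the `m`-fold convolution `f^{*m}`: `f^{*1} = f` and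
`f^{*(m+1)}(x) = ∫ t, f^{*m}(x - t) * f t` (junk value `0` at `m = 0`). -/
noncomputable def iterConv (f : ℝ → ℝ) : ℕ → ℝ → ℝ
  | 0 => fun _ => 0
  | 1 => f
  | (n+2) => fun x => ∫ t : ℝ, iterConv f (n+1) (x - t) * f t

open MeasureTheory intervalIntegral


lemma beta_nat (a b : ℝ) : ∀ (q p : ℕ),
    ∫ x in a..b, (x - a) ^ p * (b - x) ^ q
      = (b - a) ^ (p + q + 1) * (p.factorial * q.factorial / (p + q + 1).factorial) := by
  intro q
  induction q with
  | zero =>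
    intro p
    simp only [pow_zero, mul_one, Nat.factorial_zero, Nat.cast_one, Nat.add_zero]
    rw [intervalIntegral.integral_comp_sub_right (fun x => x ^ p) a,
      integral_pow, sub_self, zero_pow (by omega)]
    rw [Nat.factorial_succ]
    have h1 : (p.factorial : ℝ) ≠ 0 := Nat.cast_ne_zero.mpr p.factorial_ne_zero
    have h2 : ((p : ℝ) + 1) ≠ 0 := by positivity
    push_cast
    field_simp
    ring
  | succ q ih =>
    intro p
    have hu : ∀ x ∈ Set.uIcc a b, HasDerivAt (fun y => (b - y) ^ (q + 1))
        (-(((q:ℝ) + 1) * (b - x) ^ q)) x := by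
      intro x _
      have h1 : HasDerivAt (fun y : ℝ => b - y) (-1) x := (hasDerivAt_id x).const_sub b
      have := h1.pow (q + 1)
      refine this.congr_deriv ?_
      push_cast; ring_nf
    have hv : ∀ x ∈ Set.uIcc a b, HasDerivAt (fun y => (y - a) ^ (p + 1) / ((p : ℝ) + 1))
        ((x - a) ^ p) x := by
      intro x _
      have h1 : HasDerivAt (fun y : ℝ => y - a) 1 x := (hasDerivAt_id x).sub_const a
      have := (h1.pow (p + 1)).div_const ((p : ℝ) + 1)
      refine this.congr_deriv ?_
      have h2 : ((p : ℝ) + 1) ≠ 0 := by positivity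
      push_cast
      field_simp
    have hiu : IntervalIntegrable (fun x => -(((q:ℝ) + 1) * (b - x) ^ q)) volume a b :=
      (Continuous.intervalIntegrable (by fun_prop) a b)
    have hiv : IntervalIntegrable (fun x : ℝ => (x - a) ^ p) volume a b :=
      (Continuous.intervalIntegrable (by fun_prop) a b)
    have ibp := intervalIntegral.integral_mul_deriv_eq_deriv_mul hu hv hiu hiv
    have e1 : ∀ x : ℝ, (x - a) ^ p * (b - x) ^ (q + 1) = (b - x) ^ (q+1) * (x - a) ^ p := by
      intro x; ring
    simp only [e1]
    rw [ibp]
    have e2 : (fun x : ℝ => -(((q:ℝ) + 1) * (b - x) ^ q) * ((x - a) ^ (p + 1) / ((p:ℝ) + 1)))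
        = fun x => (-(((q:ℝ) + 1) / ((p:ℝ) + 1))) * ((x - a) ^ (p + 1) * (b - x) ^ q) := by
      funext x
      have h2 : ((p : ℝ) + 1) ≠ 0 := by positivity
      field_simp
    rw [e2, intervalIntegral.integral_const_mul, ih (p + 1)]
    have hfac : (((p+1) + q + 1).factorial : ℝ) = ((p + (q+1) + 1).factorial : ℝ) := by
      norm_num; ring_nf
    have h2 : ((p : ℝ) + 1) ≠ 0 := by positivity
    have h3 : (((p + (q+1) + 1).factorial : ℝ)) ≠ 0 := Nat.cast_ne_zero.mpr (Nat.factorial_ne_zero _)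
    rw [sub_self, zero_pow (by omega), sub_self, zero_pow (by omega)]
    rw [show (p+1) + q + 1 = p + (q+1) + 1 from by omega]
    rw [Nat.factorial_succ p, Nat.factorial_succ q]
    push_cast
    field_simp
    ring

lemma iterConv_gt (r : ℕ) : ∀ (m : ℕ) (x : ℝ), (m : ℝ) < x → iterConv (gdens r) m x = 0
  | 0, x, _ => rfl
  | 1, x, h => by
      simp only [iterConv, gdens]
      rw [if_neg]
      intro hx
      rw [Nat.cast_one] at h
      linarith [hx.2]
  | (n+2), x, h => by
      simp only [iterConv]
      have hz : ∀ t : ℝ, iterConv (gdens r) (n+1) (x - t) * gdens r t = 0 := by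
        intro t
        by_cases ht : t ∈ Set.Icc (0:ℝ) 1
        · rw [iterConv_gt r (n+1) (x - t) (by push_cast at h ⊢; linarith [ht.2]), zero_mul]
        · rw [gdens, if_neg ht, mul_zero]
      simp only [hz, integral_zero]

theorem stmt_7 (r m : ℕ) (hr : 0 < r) (hm : 0 < m) :
    ∀ x ∈ Set.Icc ((m : ℝ) - 1) (m : ℝ),
      iterConv (gdens r) m x =
        (r.factorial : ℝ) ^ m / ((m * r - 1).factorial : ℝ) * ((m : ℝ) - x) ^ (m * r - 1) := by
  induction m, hm using Nat.le_induction with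
  | base =>
    intro x hx
    rw [Nat.cast_one] at hx
    show gdens r x = _
    rw [gdens, if_pos (by constructor <;> [linarith [hx.1]; exact hx.2])]
    rw [show 1 * r - 1 = r - 1 from by omega, pow_one, Nat.cast_one]
    congr 1
    have h1 : (r.factorial : ℝ) = (r : ℝ) * ((r-1).factorial : ℝ) := by
      rw [← Nat.cast_mul, Nat.mul_factorial_pred hr.ne']
    rw [h1]
    have h2 : (((r-1).factorial : ℝ)) ≠ 0 := Nat.cast_ne_zero.mpr (Nat.factorial_ne_zero _)
    field_simp
  | succ m hm1 ih =>
    intro x hx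
    obtain ⟨hx1, hx2⟩ : (m : ℝ) ≤ x ∧ x ≤ (m : ℝ) + 1 := by
      push_cast at hx; exact ⟨by linarith [hx.1], by linarith [hx.2]⟩
    obtain ⟨n, rfl⟩ : ∃ n, m = n + 1 := ⟨m - 1, by omega⟩
    set C : ℝ := (r.factorial : ℝ) ^ (n+1) / (((n+1) * r - 1).factorial : ℝ) with hC
    have key : (fun t => iterConv (gdens r) (n+1) (x - t) * gdens r t)
        = (Set.Icc (x - (n+1:ℝ)) 1).indicator
            (fun t => (C * r) * ((t - (x - (n+1:ℝ))) ^ ((n+1)*r - 1) * (1 - t) ^ (r - 1))) := by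
      funext t
      by_cases ht : t ∈ Set.Icc (x - (n+1:ℝ)) 1
      · rw [Set.indicator_of_mem ht]
        obtain ⟨ht1, ht2⟩ := ht
        have hcast : ((n:ℝ) + 1) = ((n+1 : ℕ) : ℝ) := by push_cast; ring
        have ht01 : t ∈ Set.Icc (0:ℝ) 1 := ⟨by push_cast at hx1 ⊢; linarith, ht2⟩
        rw [gdens, if_pos ht01]
        rw [ih (x - t) ⟨by push_cast; linarith, by push_cast at ht1 ⊢; linarith⟩]
        push_cast
        ring
      · rw [Set.indicator_of_notMem ht]
        by_cases ht01 : t ∈ Set.Icc (0:ℝ) 1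
        · have hlt : t < x - ((n:ℝ)+1) := by
            by_contra hge
            exact ht ⟨not_lt.mp hge, ht01.2⟩
          have : ((n+1 : ℕ) : ℝ) < x - t := by push_cast; linarith
          rw [iterConv_gt r (n+1) (x - t) this, zero_mul]
        · rw [gdens, if_neg ht01, mul_zero]
    show (∫ t : ℝ, iterConv (gdens r) (n+1) (x - t) * gdens r t) = _
    rw [key, MeasureTheory.integral_indicator measurableSet_Icc,
      MeasureTheory.integral_Icc_eq_integral_Ioc,
      ← intervalIntegral.integral_of_le (by push_cast at hx2 ⊢; linarith),
      intervalIntegral.integral_const_mul,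
      beta_nat (x - ((n:ℝ)+1)) 1 (r-1) ((n+1)*r - 1)]
    have harith : (n+1)*r - 1 + (r-1) + 1 = (n+1+1) * r - 1 := by
      have hge : 1 ≤ (n+1) * r := Nat.one_le_iff_ne_zero.mpr (by positivity)
      have hexp : (n+1+1) * r = (n+1) * r + r := by ring
      omega
    rw [harith]
    have h1 : (1 : ℝ) - (x - ((n:ℝ)+1)) = ((n+1+1 : ℕ) : ℝ) - x := by push_cast; ring
    rw [h1]
    have hfr : (r.factorial : ℝ) = (r : ℝ) * ((r-1).factorial : ℝ) := by
      rw [← Nat.cast_mul, Nat.mul_factorial_pred hr.ne']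
    have hne1 : (((n+1) * r - 1).factorial : ℝ) ≠ 0 := Nat.cast_ne_zero.mpr (Nat.factorial_ne_zero _)
    have hne2 : (((n+1+1) * r - 1).factorial : ℝ) ≠ 0 := Nat.cast_ne_zero.mpr (Nat.factorial_ne_zero _)
    rw [hC, hfr]
    field_simp
    ring
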